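/- Let H and G be graphs with edges colored by {1,…,k} and let h = C(|V(H)|,2) − 2. If G' is an h-th augmentation of G, then hom(H,G) = Σ_{H' ∈ H^e} hom(H',G'), where H^e denotes the set of all 0-contractions of graphs obtained by recoloring zeros from h-th augmentations of H, hom(H,G) counts homomorphisms of edge-colored undirected graphs, and hom(H',G') counts homomorphisms of edge-colored directed graphs. -/

import Mathlib

/-- A graph on vertex type `V` with edges colored by colors `{1, …, k}`
(represented by `Fin k`): `col u v = some c` means `uv` is an edge of color `c`. -/
structure EColGraph (V : Type) (k : ℕ) where
  col : V → V → Option (Fin k)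
  symm : ∀ u v, col u v = col v u
  irrefl : ∀ v, col v v = none

/-- A directed graph with edges colored by colors `{0, 1, …, k}` (represented by
`Fin (k+1)`, the color `i` of an original edge being represented by `Fin.succ`
and the new color `0` by `0`): edges join distinct vertices and no pair of vertices
is joined in both directions. -/
structure CDigraph (V : Type) (k : ℕ) where
  col : V → V → Option (Fin (k + 1))
  irrefl : ∀ v, col v v = none
  asym : ∀ u v, (col u v).isSome → col v u = none

/-- Two distinct non-adjacent vertices `u`, `v` of a colored directed graph (given by
its coloring function `f`) form a fork if there is `w` with edges `(u,w)`, `(v,w)`. -/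
def QFork {A : Type} {k : ℕ} (f : A → A → Option (Fin (k + 1))) (u v : A) : Prop :=
  u ≠ v ∧ f u v = none ∧ f v u = none ∧ ∃ w, (f u w).isSome ∧ (f v w).isSome

/-- `D` is an orientation of the edge-colored graph `G`; each edge keeps its color
(color `c` of `G` is represented by `Fin.succ c` in `D`). -/
def IsOrientation {V : Type} {k : ℕ} (G : EColGraph V k) (D : CDigraph V k) : Prop :=
  (∀ u v c, D.col u v = some c → ∃ c' : Fin k, c = Fin.succ c' ∧ G.col u v = some c') ∧
  (∀ u v (c : Fin k), G.col u v = some c →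
    D.col u v = some (Fin.succ c) ∨ D.col v u = some (Fin.succ c))

/-- `D'` is a fraternal augmentation of `D`: for every fork `u,v` of `D`, exactly one
of the edges `(u,v)`, `(v,u)` is added with the new color `0`, and no other edges are
added or changed. -/
def IsFraternalAug {V : Type} {k : ℕ} (D D' : CDigraph V k) : Prop :=
  (∀ u v c, D.col u v = some c → D'.col u v = some c) ∧
  (∀ u v, QFork D.col u v → D'.col u v = some 0 ∨ D'.col v u = some 0) ∧
  (∀ u v c, D'.col u v = some c →
    D.col u v = some c ∨ ((QFork D.col u v ∨ QFork D.col v u) ∧ c = 0))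

/-- `IsAug G h D`: `D` is an `h`-th augmentation of `G`, i.e. it is obtained from an
orientation of `G` by iterating fraternal augmentation `h` times. -/
def IsAug {V : Type} {k : ℕ} (G : EColGraph V k) : ℕ → CDigraph V k → Prop
  | 0, D => IsOrientation G D
  | n + 1, D => ∃ D', IsAug G n D' ∧ IsFraternalAug D' D

/-- `D'` is obtained from `D` by recoloring zeros: they differ only in the colors of
edges whose color in `D` is `0`. -/
def RecolorZeros {V : Type} {k : ℕ} (D D' : CDigraph V k) : Prop :=
  ∀ u v, D'.col u v = D.col u v ∨ (D.col u v = some 0 ∧ (D'.col u v).isSome)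

/-- A homomorphism of edge-colored (undirected) graphs. -/
def IsHom {V W : Type} {k : ℕ} (H : EColGraph V k) (G : EColGraph W k)
    (φ : V → W) : Prop :=
  ∀ u v c, H.col u v = some c → G.col (φ u) (φ v) = some c

/-- `hom(H,G)`: the number of homomorphisms between edge-colored undirected graphs. -/
noncomputable def homCount {V W : Type} {k : ℕ} (H : EColGraph V k) (G : EColGraph W k) : ℕ :=
  Nat.card {φ : V → W // IsHom H G φ}

/-- A partition `P` of the vertices of `D` is `0`-admissible: each part induces a
connected subgraph all of whose edges have color `0`, between two distinct parts all
edges go in the same direction, and they all have the same color. -/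
def ZeroAdmissible {V : Type} {k : ℕ} (D : CDigraph V k) (P : Setoid V) : Prop :=
  (∀ u v, P.r u v → ∀ c, D.col u v = some c → c = 0) ∧
  (∀ u v, P.r u v → Relation.ReflTransGen
      (fun a b => P.r a u ∧ P.r b u ∧ ((D.col a b).isSome ∨ (D.col b a).isSome)) u v) ∧
  (∀ u u' v v', P.r u u' → P.r v v' → ¬ P.r u v → (D.col u v).isSome → D.col v' u' = none) ∧
  (∀ u u' v v' c c', P.r u u' → P.r v v' → ¬ P.r u v →
    D.col u v = some c → D.col u' v' = some c' → c' = c)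

open Classical in
/-- The `0`-contraction of `D` corresponding to a partition `P`, encoded on the
original vertices: `rcol D P u v` is the color of the edge of the contraction from the
part of `u` to the part of `v` (and `none` if there is no such edge).  Together with
`P` this datum is exactly the `0`-contraction. -/
noncomputable def rcol {V : Type} {k : ℕ} (D : CDigraph V k) (P : Setoid V) :
    V → V → Option (Fin (k + 1)) :=
  fun u v =>
    if h : ¬ P.r u v ∧ ∃ c u' v', P.r u u' ∧ P.r v v' ∧ D.col u' v' = some c
    then some h.2.choose else none

/-- The number of homomorphisms from a `0`-contraction, given by a partition `P` of
`V` and its coloring `f` encoded on the original vertices, to the colored directed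
graph with coloring `Gc`: homomorphisms from the contraction correspond bijectively to
the maps `ψ : V → W` that are constant on the parts of `P` and map every edge of the
contraction to an edge of the same color. -/
noncomputable def contractionHomCount {V W : Type} {k : ℕ} (P : Setoid V)
    (f : V → V → Option (Fin (k + 1))) (Gc : W → W → Option (Fin (k + 1))) : ℕ :=
  Nat.card {ψ : V → W // (∀ u v, P.r u v → ψ u = ψ v) ∧
    ∀ u v c, f u v = some c → Gc (ψ u) (ψ v) = some c}

namespace ECount
open Relation

variable {V W : Type} {k : ℕ}

theorem qfork_symm {f : V → V → Option (Fin (k+1))} {u v : V} (h : QFork f u v) :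
    QFork f v u :=
  ⟨h.1.symm, h.2.2.1, h.2.1, h.2.2.2.imp fun _ hw => ⟨hw.2, hw.1⟩⟩

theorem isAug_edge {G : EColGraph V k} :
    ∀ {n : ℕ} {D : CDigraph V k}, IsAug G n D → ∀ u v (c : Fin k), G.col u v = some c →
      D.col u v = some c.succ ∨ D.col v u = some c.succ := by
  intro n
  induction n with
  | zero => intro D h u v c hc; exact h.2 u v c hc
  | succ n ih =>
    rintro D ⟨D', hD', hf⟩ u v c hc
    rcases ih hD' u v c hc with h1 | h1
    · exact Or.inl (hf.1 _ _ _ h1)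
    · exact Or.inr (hf.1 _ _ _ h1)

theorem isAug_nonzero {G : EColGraph V k} :
    ∀ {n : ℕ} {D : CDigraph V k}, IsAug G n D → ∀ u v (c : Fin (k+1)), D.col u v = some c →
      c ≠ 0 → ∃ c' : Fin k, c = Fin.succ c' ∧ G.col u v = some c' := by
  intro n
  induction n with
  | zero => intro D h u v c hc _; exact h.1 u v c hc
  | succ n ih =>
    rintro D ⟨D', hD', hf⟩ u v c hc hc0
    rcases hf.2.2 u v c hc with h1 | h1
    · exact ih hD' u v c h1 hc0
    · exact absurd h1.2 hc0

def edgeFinset [Fintype V] (D : CDigraph V k) : Finset (V × V) :=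
  Finset.univ.filter fun p => (D.col p.1 p.2).isSome

theorem mem_edgeFinset [Fintype V] {D : CDigraph V k} {p : V × V} :
    p ∈ edgeFinset D ↔ (D.col p.1 p.2).isSome := by
  simp [edgeFinset]

theorem frat_fork_back {D D' : CDigraph V k} (hf : IsFraternalAug D D') {u v : V}
    (h : QFork D'.col u v) : ∃ a b, QFork D.col a b := by
  obtain ⟨huv, h1, h2, w, hw1, hw2⟩ := h
  rcases Option.isSome_iff_exists.mp hw1 with ⟨c1, hc1⟩
  rcases Option.isSome_iff_exists.mp hw2 with ⟨c2, hc2⟩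
  rcases hf.2.2 u w c1 hc1 with e1 | e1
  swap
  · rcases e1.1 with q | q
    exacts [⟨u, w, q⟩, ⟨w, u, q⟩]
  rcases hf.2.2 v w c2 hc2 with e2 | e2
  swap
  · rcases e2.1 with q | q
    exacts [⟨v, w, q⟩, ⟨w, v, q⟩]
  have hn1 : D.col u v = none := by
    cases hD : D.col u v with
    | none => rfl
    | some c => rw [hf.1 u v c hD] at h1; exact absurd h1 (by simp)
  have hn2 : D.col v u = none := by
    cases hD : D.col v u with
    | none => rfl
    | some c => rw [hf.1 v u c hD] at h2; exact absurd h2 (by simp)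
  exact ⟨u, v, huv, hn1, hn2, w, by simp [e1], by simp [e2]⟩

theorem frat_edges_lt [Fintype V] {D D' : CDigraph V k} (hf : IsFraternalAug D D')
    {a b : V} (hq : QFork D.col a b) : (edgeFinset D).card < (edgeFinset D').card := by
  apply Finset.card_lt_card
  constructor
  · intro p hp
    rw [mem_edgeFinset] at hp ⊢
    rcases Option.isSome_iff_exists.mp hp with ⟨c, hc⟩
    rw [hf.1 _ _ _ hc]; rfl
  · intro hsub
    rcases hf.2.1 a b hq with hnew | hnew
    · have hmem : ((a, b) : V × V) ∈ edgeFinset D' := mem_edgeFinset.mpr (by rw [hnew]; rfl)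
      have := hsub hmem
      rw [mem_edgeFinset] at this; simp only [hq.2.1] at this; exact absurd this (by simp)
    · have hmem : ((b, a) : V × V) ∈ edgeFinset D' := mem_edgeFinset.mpr (by rw [hnew]; rfl)
      have := hsub hmem
      rw [mem_edgeFinset] at this; simp only [hq.2.2.1] at this; exact absurd this (by simp)

theorem isAug_chain [Fintype V] {Gg : EColGraph V k} :
    ∀ {n : ℕ} {D : CDigraph V k}, IsAug Gg n D → (∃ a b, QFork D.col a b) →
      ∃ D0 : CDigraph V k, IsOrientation Gg D0 ∧ (∃ a b, QFork D0.col a b) ∧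
        (edgeFinset D0).card + n ≤ (edgeFinset D).card := by
  intro n
  induction n with
  | zero => intro D h hfk; exact ⟨D, h, hfk, by omega⟩
  | succ n ih =>
    rintro D ⟨D', hD', hfr⟩ ⟨a, b, hq⟩
    obtain ⟨a', b', hq'⟩ := frat_fork_back hfr hq
    obtain ⟨D0, h0, hf0, hc⟩ := ih hD' ⟨a', b', hq'⟩
    have hlt := frat_edges_lt hfr hq'
    exact ⟨D0, h0, hf0, by omega⟩

theorem fork_two_le [Fintype V] {D : CDigraph V k} {u v : V} (h : QFork D.col u v) :
    2 ≤ (edgeFinset D).card := by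
  classical
  obtain ⟨huv, -, -, w, hw1, hw2⟩ := h
  have h1 : (u, w) ∈ edgeFinset D := mem_edgeFinset.mpr hw1
  have h2 : (v, w) ∈ edgeFinset D := mem_edgeFinset.mpr hw2
  have : ({(u, w), (v, w)} : Finset (V × V)) ⊆ edgeFinset D := by
    intro p hp
    rcases Finset.mem_insert.mp hp with rfl | hp
    · exact h1
    · rw [Finset.mem_singleton.mp hp]; exact h2
  have hcard : ({(u, w), (v, w)} : Finset (V × V)).card = 2 := by
    rw [Finset.card_insert_of_notMem (by simp [huv]), Finset.card_singleton]
  rw [← hcard]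
  exact Finset.card_le_card this

theorem fork_three_le [Fintype V] {D : CDigraph V k} {u v : V} (h : QFork D.col u v) :
    3 ≤ Fintype.card V := by
  classical
  obtain ⟨huv, -, -, w, hw1, hw2⟩ := h
  have hwu : w ≠ u := by
    intro rfl'; subst rfl'; rw [D.irrefl] at hw1; exact absurd hw1 (by simp)
  have hwv : w ≠ v := by
    intro rfl'; subst rfl'; rw [D.irrefl] at hw2; exact absurd hw2 (by simp)
  have : ({u, v, w} : Finset V).card = 3 := by
    rw [Finset.card_insert_of_notMem (by simp [huv, hwu.symm]),
      Finset.card_insert_of_notMem (by simp [hwv.symm]), Finset.card_singleton]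
  rw [← this]
  exact Finset.card_le_card (Finset.subset_univ _) |>.trans (le_of_eq (Finset.card_univ))

theorem edge_bound [Fintype V] {D : CDigraph V k} {u v : V} (h : QFork D.col u v) :
    2 * (edgeFinset D).card + 2 ≤ Fintype.card V * (Fintype.card V - 1) := by
  classical
  set E := edgeFinset D with hE
  set E' := E.image Prod.swap with hE'
  have hmemE : ∀ p : V × V, p ∈ E ↔ (D.col p.1 p.2).isSome := fun p => mem_edgeFinset
  have hmemE' : ∀ p : V × V, p ∈ E' → (D.col p.2 p.1).isSome := by
    rintro ⟨x, y⟩ hp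
    rcases Finset.mem_image.mp hp with ⟨⟨a, b⟩, hab, habe⟩
    simp only [Prod.swap_prod_mk, Prod.mk.injEq] at habe
    rcases habe with ⟨rfl, rfl⟩
    exact (hmemE _).mp hab
  have hdisj : Disjoint E E' := by
    rw [Finset.disjoint_left]
    rintro ⟨x, y⟩ hxe hxe'
    have h1 := (hmemE _).mp hxe
    have h2 := hmemE' _ hxe'
    rw [D.asym x y h1] at h2
    exact absurd h2 (by simp)
  have hpair : ((({(u, v), (v, u)} : Finset (V × V)))).card = 2 := by
    rw [Finset.card_insert_of_notMem (by simp [h.1]), Finset.card_singleton]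
  have hdisj2 : Disjoint (E ∪ E') ({(u, v), (v, u)} : Finset (V × V)) := by
    rw [Finset.disjoint_right]
    intro p hp hpu
    rcases Finset.mem_insert.mp hp with rfl | hp'
    · rcases Finset.mem_union.mp hpu with h1 | h1
      · have := (hmemE _).mp h1; rw [h.2.1] at this; exact absurd this (by simp)
      · have := hmemE' _ h1; rw [h.2.2.1] at this; exact absurd this (by simp)
    · have hpvu : p = (v, u) := Finset.mem_singleton.mp hp'
      subst hpvu
      rcases Finset.mem_union.mp hpu with h1 | h1
      · have := (hmemE _).mp h1; rw [h.2.2.1] at this; exact absurd this (by simp)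
      · have := hmemE' _ h1; rw [h.2.1] at this; exact absurd this (by simp)
  have hsub : (E ∪ E') ∪ ({(u, v), (v, u)} : Finset (V × V)) ⊆ Finset.univ.offDiag := by
    intro p hp
    have hne : p.1 ≠ p.2 → p ∈ Finset.univ.offDiag := by
      intro hne
      exact Finset.mem_offDiag.mpr ⟨Finset.mem_univ _, Finset.mem_univ _, hne⟩
    rcases Finset.mem_union.mp hp with hp1 | hp1
    · rcases Finset.mem_union.mp hp1 with h1 | h1
      · apply hne; intro heq
        have := (hmemE _).mp h1; rw [heq, D.irrefl] at this; exact absurd this (by simp)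
      · apply hne; intro heq
        have := hmemE' _ h1; rw [← heq, D.irrefl] at this; exact absurd this (by simp)
    · rcases Finset.mem_insert.mp hp1 with rfl | hp'
      · exact hne h.1
      · have hpvu : p = (v, u) := Finset.mem_singleton.mp hp'
        subst hpvu
        exact hne h.1.symm
  have hcards : E.card + E'.card + 2 ≤ (Finset.univ : Finset V).offDiag.card := by
    have := Finset.card_le_card hsub
    rw [Finset.card_union_of_disjoint hdisj2, Finset.card_union_of_disjoint hdisj, hpair] at this
    exact this
  have hE'card : E'.card = E.card := Finset.card_image_of_injective _ Prod.swap_injective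
  have hoff : (Finset.univ : Finset V).offDiag.card
      = Fintype.card V * Fintype.card V - Fintype.card V := by
    rw [Finset.offDiag_card, Finset.card_univ]
  have harith : Fintype.card V * Fintype.card V - Fintype.card V
      = Fintype.card V * (Fintype.card V - 1) := by
    cases hn : Fintype.card V with
    | zero => simp
    | succ m => rw [Nat.mul_succ, Nat.add_sub_cancel, Nat.succ_sub_one]
  omega

theorem isAug_forkFree [Fintype V] {Gg : EColGraph V k} {D : CDigraph V k}
    (h : IsAug Gg (Nat.choose (Fintype.card V) 2 - 2) D) (u v : V) : ¬ QFork D.col u v := by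
  intro hq
  obtain ⟨D0, _, ⟨a, b, hq0⟩, hcard⟩ := isAug_chain h ⟨u, v, hq⟩
  have h2 := fork_two_le hq0
  have h3 := fork_three_le hq
  have hb := edge_bound hq
  have h2c : 2 * Nat.choose (Fintype.card V) 2 = Fintype.card V * (Fintype.card V - 1) := by
    rw [Nat.choose_two_right]
    refine Nat.mul_div_cancel' ?_
    have : Even ((Fintype.card V - 1) * (Fintype.card V - 1 + 1)) := Nat.even_mul_succ_self _
    have h1 : Fintype.card V - 1 + 1 = Fintype.card V := by omega
    rw [h1, mul_comm] at this
    exact this.two_dvd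
  have h6 : 6 ≤ Fintype.card V * (Fintype.card V - 1) := by
    calc (6 : ℕ) = 3 * 2 := rfl
    _ ≤ Fintype.card V * (Fintype.card V - 1) := Nat.mul_le_mul h3 (by omega)
  omega

end ECount
namespace ECount
open Relation

variable {V W : Type} {k : ℕ}

structure Wit (H : EColGraph V k) (G' : CDigraph W k) (φ : V → W) (hn : ℕ) where
  A : CDigraph V k
  H0 : CDigraph V k
  P : Setoid V
  aug : IsAug H hn A
  rz : RecolorZeros A H0
  adm : ZeroAdmissible H0 P
  const : ∀ u v, P.r u v → φ u = φ v
  compat : ∀ u v c, rcol H0 P u v = some c → G'.col (φ u) (φ v) = some c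

variable {H : EColGraph V k} {G' : CDigraph W k} {φ : V → W} {hn : ℕ}

namespace Wit

theorem supp (wt : Wit H G' φ hn) (u v : V) :
    (wt.H0.col u v).isSome ↔ (wt.A.col u v).isSome := by
  rcases wt.rz u v with h | h
  · rw [h]
  · simp [h.1, h.2]

theorem keep (wt : Wit H G' φ hn) {u v : V} {c : Fin (k+1)} (h : wt.A.col u v = some c)
    (hc : c ≠ 0) : wt.H0.col u v = some c := by
  rcases wt.rz u v with h' | h'
  · rw [h', h]
  · exfalso; rw [h'.1] at h; exact hc (Option.some_injective _ h).symm

theorem cross_col (wt : Wit H G' φ hn) {u v : V} {c : Fin (k+1)} (hne : ¬ wt.P.r u v)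
    (h : wt.H0.col u v = some c) : G'.col (φ u) (φ v) = some c := by
  have hcond : ¬ wt.P.r u v ∧ ∃ c' u' v', wt.P.r u u' ∧ wt.P.r v v' ∧ wt.H0.col u' v' = some c' :=
    ⟨hne, c, u, v, wt.P.iseqv.refl u, wt.P.iseqv.refl v, h⟩
  have hr : rcol wt.H0 wt.P u v = some hcond.2.choose := by
    simp only [rcol]; rw [dif_pos hcond]
  obtain ⟨a, b, hua, hvb, hab⟩ := hcond.2.choose_spec
  have hcc : hcond.2.choose = c := wt.adm.2.2.2 u a v b c hcond.2.choose hua hvb hne h hab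
  rw [← hcc]; exact wt.compat u v _ hr

theorem cross_some (wt : Wit H G' φ hn) {u v : V} (hne : ¬ wt.P.r u v)
    (h : (wt.H0.col u v).isSome) : (G'.col (φ u) (φ v)).isSome := by
  rcases Option.isSome_iff_exists.mp h with ⟨c, hc⟩
  rw [wt.cross_col hne hc]; rfl

theorem fiber_rel (wt : Wit H G' φ hn) {u v : V} (hfib : φ u = φ v)
    (h : (wt.H0.col u v).isSome) : wt.P.r u v := by
  by_contra hne
  have h2 := wt.cross_some hne h
  rw [hfib, G'.irrefl] at h2
  exact absurd h2 (by simp)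

theorem internal_zero (wt : Wit H G' φ hn) {u v : V} {c : Fin (k+1)} (hr : wt.P.r u v)
    (h : wt.H0.col u v = some c) : c = 0 :=
  wt.adm.1 u v hr c h

theorem hadj (wt : Wit H G' φ hn) (ff : ∀ a b, ¬ QFork wt.A.col a b) {x y w : V} (hxy : x ≠ y)
    (h1 : (wt.H0.col x w).isSome) (h2 : (wt.H0.col y w).isSome) :
    (wt.H0.col x y).isSome ∨ (wt.H0.col y x).isSome := by
  rw [wt.supp x w] at h1
  rw [wt.supp y w] at h2
  rw [wt.supp x y, wt.supp y x]
  by_contra hcon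
  rcases not_or.mp hcon with ⟨hc1, hc2⟩
  exact ff x y ⟨hxy, Option.not_isSome_iff_eq_none.mp hc1,
    Option.not_isSome_iff_eq_none.mp hc2, w, h1, h2⟩

/-- The internal-edge relation of the part of `w`. -/
def Srel (wt : Wit H G' φ hn) (w : V) : V → V → Prop :=
  fun p q => wt.P.r p w ∧ wt.P.r q w ∧ (wt.H0.col p q).isSome

theorem srel_mem (wt : Wit H G' φ hn) {w a b : V} (h : ReflTransGen (wt.Srel w) a b) :
    a = b ∨ wt.P.r a w := by
  induction h with
  | refl => exact Or.inl rfl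
  | @tail x y h1 h2 ih =>
    rcases ih with rfl | h
    · exact Or.inr h2.1
    · exact Or.inr h

theorem claimB (wt : Wit H G' φ hn) (ff : ∀ a b, ¬ QFork wt.A.col a b) {w : V} :
    ∀ {z ω : V}, ReflTransGen (wt.Srel w) z ω → ∀ x, wt.P.r x w → wt.P.r z w →
      (wt.H0.col x ω).isSome →
      ∃ c, ReflTransGen (wt.Srel w) c x ∧ ReflTransGen (wt.Srel w) c z := by
  intro z ω hp
  induction hp with
  | refl =>
    intro x hxw hzw hedge
    exact ⟨x, .refl, .single ⟨hxw, hzw, hedge⟩⟩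
  | @tail y ω h1 h2 ih =>
    intro x hxw hzw hedge
    obtain ⟨hyw, hωw, hyo⟩ := h2
    by_cases hxy : x = y
    · subst hxy
      exact ⟨z, h1, .refl⟩
    · rcases wt.hadj ff hxy hedge hyo with hgood | hback
      · exact ih x hxw hzw hgood
      · exact ⟨z, h1.tail ⟨hyw, hxw, hback⟩, .refl⟩

theorem hcommon (wt : Wit H G' φ hn) (ff : ∀ a b, ¬ QFork wt.A.col a b) {w w' : V}
    (h : wt.P.r w w') :
    ∃ c, wt.P.r c w ∧ ReflTransGen (wt.Srel w) c w ∧ ReflTransGen (wt.Srel w) c w' := by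
  have hpath := wt.adm.2.1 w w' h
  clear h
  induction hpath with
  | refl => exact ⟨w, wt.P.iseqv.refl w, .refl, .refl⟩
  | @tail b c h1 h2 ih =>
    obtain ⟨z, hzw, hz1, hz2⟩ := ih
    obtain ⟨hbw, hcw, hadjbc⟩ := h2
    rcases hadjbc with he | he
    · exact ⟨z, hzw, hz1, hz2.tail ⟨hbw, hcw, he⟩⟩
    · obtain ⟨c2, hc2x, hc2z⟩ := wt.claimB ff hz2 c hcw hzw he
      have hc2w : wt.P.r c2 w := by
        rcases wt.srel_mem hc2x with rfl | hm
        · exact hcw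
        · exact hm
      exact ⟨c2, hc2w, hc2z.trans hz1, hc2x⟩

theorem propagate (wt : Wit H G' φ hn) (ff : ∀ a b, ¬ QFork wt.A.col a b) {w x : V}
    (hx : ¬ wt.P.r x w) :
    ∀ {z ω : V}, ReflTransGen (wt.Srel w) z ω → (wt.H0.col x ω).isSome →
      (wt.H0.col x z).isSome := by
  intro z ω hp
  induction hp with
  | refl => exact id
  | @tail y ω h1 h2 ih =>
    intro hedge
    obtain ⟨hyw, hωw, hyo⟩ := h2
    have hxy : x ≠ y := fun he => hx (he ▸ hyw)
    rcases wt.hadj ff hxy hedge hyo with hgood | hbad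
    · exact ih hgood
    · exfalso
      have hrωy : wt.P.r ω y := wt.P.iseqv.trans hωw (wt.P.iseqv.symm hyw)
      have hnxω : ¬ wt.P.r x ω := fun hc => hx (wt.P.iseqv.trans hc hωw)
      have := wt.adm.2.2.1 x x ω y (wt.P.iseqv.refl x) hrωy hnxω hedge
      rw [this] at hbad
      exact absurd hbad (by simp)

theorem lemU (wt : Wit H G' φ hn) (ff : ∀ a b, ¬ QFork wt.A.col a b) {u v w w' : V}
    (hu : (wt.H0.col u w).isSome) (hv : (wt.H0.col v w').isSome) (hww : wt.P.r w w')
    (hnu : ¬ wt.P.r u w) (hnv : ¬ wt.P.r v w) (hnuv : ¬ wt.P.r u v) :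
    (wt.H0.col u v).isSome ∨ (wt.H0.col v u).isSome := by
  obtain ⟨z, hzw, hz1, hz2⟩ := wt.hcommon ff hww
  have hu' := wt.propagate ff hnu hz1 hu
  have hv' := wt.propagate ff hnv hz2 hv
  have hne : u ≠ v := by
    intro he; rw [he] at hnuv; exact hnuv (wt.P.iseqv.refl v)
  exact wt.hadj ff hne hu' hv'

end Wit

inductive DStar (H : EColGraph V k) (G' : CDigraph W k) (φ : V → W) : V → V → Prop
  | base (u v : V) (c : Fin k) : H.col u v = some c → G'.col (φ u) (φ v) = some c.succ →
      DStar H G' φ u v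
  | fork1 (a b w : V) : DStar H G' φ a w → DStar H G' φ b w → a ≠ b → φ a = φ b →
      DStar H G' φ a b
  | fork2 (a b w : V) : DStar H G' φ a w → DStar H G' φ b w → a ≠ b →
      (G'.col (φ a) (φ b)).isSome → DStar H G' φ a b

def RCrel (H : EColGraph V k) (G' : CDigraph W k) (φ : V → W) : V → V → Prop :=
  ReflTransGen (fun a b => φ a = φ b ∧ (DStar H G' φ a b ∨ DStar H G' φ b a))

namespace Wit

theorem dstar_inv (wt : Wit H G' φ hn) (ff : ∀ a b, ¬ QFork wt.A.col a b) :
    ∀ {a b : V}, DStar H G' φ a b → wt.P.r a b ∨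
      ∃ a' b', wt.P.r a a' ∧ wt.P.r b b' ∧ (wt.H0.col a' b').isSome := by
  intro a b hd
  induction hd with
  | base u v c hH hG =>
    rcases isAug_edge wt.aug u v c hH with he | he
    · have h0 : wt.H0.col u v = some c.succ := wt.keep he (Fin.succ_ne_zero c)
      exact Or.inr ⟨u, v, wt.P.iseqv.refl u, wt.P.iseqv.refl v, by rw [h0]; rfl⟩
    · exfalso
      have h0 : wt.H0.col v u = some c.succ := wt.keep he (Fin.succ_ne_zero c)
      have hnr : ¬ wt.P.r v u := fun hr => Fin.succ_ne_zero c (wt.internal_zero hr h0)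
      have hcol := wt.cross_col hnr h0
      have h2 := G'.asym _ _ (by rw [hcol]; rfl)
      rw [hG] at h2
      exact absurd h2 (by simp)
  | fork1 a b w hda hdb hne hfib iha ihb =>
    by_cases haw : wt.P.r a w <;> by_cases hbw : wt.P.r b w
    · exact Or.inl (wt.P.iseqv.trans haw (wt.P.iseqv.symm hbw))
    · exfalso
      rcases ihb with h | ⟨b', w2, hbb', hww2, hedge⟩
      · exact hbw h
      · have hnb : ¬ wt.P.r b' w2 := fun hc =>
          hbw (wt.P.iseqv.trans hbb' (wt.P.iseqv.trans hc (wt.P.iseqv.symm hww2)))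
        have hsome := wt.cross_some hnb hedge
        have e1 : φ b = φ b' := wt.const _ _ hbb'
        have e2 : φ w = φ w2 := wt.const _ _ hww2
        have e3 : φ a = φ w := wt.const _ _ haw
        rw [← e1, ← e2, ← e3, ← hfib, G'.irrefl] at hsome
        exact absurd hsome (by simp)
    · exfalso
      rcases iha with h | ⟨a', w1, haa', hww1, hedge⟩
      · exact haw h
      · have hna : ¬ wt.P.r a' w1 := fun hc =>
          haw (wt.P.iseqv.trans haa' (wt.P.iseqv.trans hc (wt.P.iseqv.symm hww1)))
        have hsome := wt.cross_some hna hedge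
        have e1 : φ a = φ a' := wt.const _ _ haa'
        have e2 : φ w = φ w1 := wt.const _ _ hww1
        have e3 : φ b = φ w := wt.const _ _ hbw
        rw [← e1, ← e2, ← e3, ← hfib, G'.irrefl] at hsome
        exact absurd hsome (by simp)
    · by_cases hab : wt.P.r a b
      · exact Or.inl hab
      · exfalso
        rcases iha with h | ⟨a', w1, haa', hww1, hea⟩
        · exact haw h
        rcases ihb with h | ⟨b', w2, hbb', hww2, heb⟩
        · exact hbw h
        have hw12 : wt.P.r w1 w2 := wt.P.iseqv.trans (wt.P.iseqv.symm hww1) hww2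
        have hna : ¬ wt.P.r a' w1 := fun hc =>
          haw (wt.P.iseqv.trans haa' (wt.P.iseqv.trans hc (wt.P.iseqv.symm hww1)))
        have hnb : ¬ wt.P.r b' w1 := fun hc =>
          hbw (wt.P.iseqv.trans hbb' (wt.P.iseqv.trans hc (wt.P.iseqv.symm hww1)))
        have hnab : ¬ wt.P.r a' b' := fun hc =>
          hab (wt.P.iseqv.trans haa' (wt.P.iseqv.trans hc (wt.P.iseqv.symm hbb')))
        have e1 : φ a = φ a' := wt.const _ _ haa'
        have e2 : φ b = φ b' := wt.const _ _ hbb'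
        rcases wt.lemU ff hea heb hw12 hna hnb hnab with hs | hs
        · have := wt.cross_some hnab hs
          rw [← e1, ← e2, ← hfib, G'.irrefl] at this
          exact absurd this (by simp)
        · have hnba : ¬ wt.P.r b' a' := fun hc => hnab (wt.P.iseqv.symm hc)
          have := wt.cross_some hnba hs
          rw [← e1, ← e2, ← hfib, G'.irrefl] at this
          exact absurd this (by simp)
  | fork2 a b w hda hdb hne hG iha ihb =>
    have hfibne : φ a ≠ φ b := by
      intro he; rw [he, G'.irrefl] at hG; exact absurd hG (by simp)
    by_cases haw : wt.P.r a w <;> by_cases hbw : wt.P.r b w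
    · exact absurd (wt.const _ _ (wt.P.iseqv.trans haw (wt.P.iseqv.symm hbw))) hfibne
    · exfalso
      rcases ihb with h | ⟨b', w2, hbb', hww2, hedge⟩
      · exact hbw h
      · have hnb : ¬ wt.P.r b' w2 := fun hc =>
          hbw (wt.P.iseqv.trans hbb' (wt.P.iseqv.trans hc (wt.P.iseqv.symm hww2)))
        have hsome := wt.cross_some hnb hedge
        have e1 : φ b = φ b' := wt.const _ _ hbb'
        have e2 : φ w = φ w2 := wt.const _ _ hww2
        have e3 : φ a = φ w := wt.const _ _ haw
        rw [← e1, ← e2, ← e3] at hsome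
        have := G'.asym _ _ hsome
        rw [this] at hG
        exact absurd hG (by simp)
    · rcases iha with h | ⟨a', w1, haa', hww1, hedge⟩
      · exact absurd h haw
      · exact Or.inr ⟨a', w1, haa', wt.P.iseqv.trans hbw hww1, hedge⟩
    · rcases iha with h | ⟨a', w1, haa', hww1, hea⟩
      · exact absurd h haw
      rcases ihb with h | ⟨b', w2, hbb', hww2, heb⟩
      · exact absurd h hbw
      have hab : ¬ wt.P.r a b := fun hc => hfibne (wt.const _ _ hc)
      have hw12 : wt.P.r w1 w2 := wt.P.iseqv.trans (wt.P.iseqv.symm hww1) hww2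
      have hna : ¬ wt.P.r a' w1 := fun hc =>
        haw (wt.P.iseqv.trans haa' (wt.P.iseqv.trans hc (wt.P.iseqv.symm hww1)))
      have hnb : ¬ wt.P.r b' w1 := fun hc =>
        hbw (wt.P.iseqv.trans hbb' (wt.P.iseqv.trans hc (wt.P.iseqv.symm hww1)))
      have hnab : ¬ wt.P.r a' b' := fun hc =>
        hab (wt.P.iseqv.trans haa' (wt.P.iseqv.trans hc (wt.P.iseqv.symm hbb')))
      have e1 : φ a = φ a' := wt.const _ _ haa'
      have e2 : φ b = φ b' := wt.const _ _ hbb'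
      rcases wt.lemU ff hea heb hw12 hna hnb hnab with hs | hs
      · exact Or.inr ⟨a', b', haa', hbb', hs⟩
      · exfalso
        have hnba : ¬ wt.P.r b' a' := fun hc => hnab (wt.P.iseqv.symm hc)
        have := wt.cross_some hnba hs
        rw [← e1, ← e2] at this
        have h2 := G'.asym _ _ this
        rw [h2] at hG
        exact absurd hG (by simp)

theorem ads (wt : Wit H G' φ hn) :
    ∀ {n : ℕ} {D : CDigraph V k}, IsAug H n D →
      (∀ u v c, D.col u v = some c → wt.A.col u v = some c) →
      ∀ u v c, D.col u v = some c → DStar H G' φ u v ∧ (φ u = φ v → DStar H G' φ v u) := by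
  intro n
  induction n with
  | zero =>
    intro D hD hsub u v c hc
    obtain ⟨c', rfl, hH⟩ := hD.1 u v c hc
    have hA := hsub u v _ hc
    have h0 := wt.keep hA (Fin.succ_ne_zero c')
    have hnr : ¬ wt.P.r u v := fun hr => Fin.succ_ne_zero c' (wt.internal_zero hr h0)
    have hG := wt.cross_col hnr h0
    refine ⟨.base u v c' hH hG, fun hfib => ?_⟩
    exfalso
    rw [hfib, G'.irrefl] at hG
    exact absurd hG (by simp)
  | succ n ih =>
    rintro D ⟨D', hD', hfr⟩ hsub u v c hc
    have hsub' : ∀ u v c, D'.col u v = some c → wt.A.col u v = some c :=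
      fun a b c h => hsub a b c (hfr.1 a b c h)
    rcases hfr.2.2 u v c hc with hold | ⟨hq, rfl⟩
    · exact ih hD' hsub' u v c hold
    · have hforkdat : ∃ w, (D'.col u w).isSome ∧ (D'.col v w).isSome ∧ u ≠ v := by
        rcases hq with hq | hq
        · obtain ⟨w, hw1, hw2⟩ := hq.2.2.2
          exact ⟨w, hw1, hw2, hq.1⟩
        · obtain ⟨w, hw1, hw2⟩ := hq.2.2.2
          exact ⟨w, hw2, hw1, hq.1.symm⟩
      obtain ⟨w, hw1, hw2, hne⟩ := hforkdat
      obtain ⟨c1, hc1⟩ := Option.isSome_iff_exists.mp hw1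
      obtain ⟨c2, hc2⟩ := Option.isSome_iff_exists.mp hw2
      have du := (ih hD' hsub' u w c1 hc1).1
      have dv := (ih hD' hsub' v w c2 hc2).1
      by_cases hfib : φ u = φ v
      · exact ⟨.fork1 u v w du dv hne hfib, fun _ => .fork1 v u w dv du hne.symm hfib.symm⟩
      · have hA := hsub u v _ hc
        have hsup : (wt.H0.col u v).isSome := (wt.supp u v).mpr (by rw [hA]; rfl)
        have hnr : ¬ wt.P.r u v := fun hr => hfib (wt.const _ _ hr)
        have hsome := wt.cross_some hnr hsup
        exact ⟨.fork2 u v w du dv hne hsome, fun hf => absurd hf hfib⟩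

theorem P_eq_RC (wt : Wit H G' φ hn) (ff : ∀ a b, ¬ QFork wt.A.col a b) (u v : V) :
    wt.P.r u v ↔ RCrel H G' φ u v := by
  constructor
  · intro h
    have hpath := wt.adm.2.1 u v h
    refine ReflTransGen.mono ?_ _ _ hpath
    rintro a b ⟨hau, hbu, hadjab⟩
    have hab : wt.P.r a b := wt.P.iseqv.trans hau (wt.P.iseqv.symm hbu)
    have hfib : φ a = φ b := wt.const _ _ hab
    rcases hadjab with hs | hs
    · obtain ⟨c, hc⟩ := Option.isSome_iff_exists.mp ((wt.supp a b).mp hs)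
      exact ⟨hfib, Or.inl (wt.ads wt.aug (fun _ _ _ h => h) a b c hc).1⟩
    · obtain ⟨c, hc⟩ := Option.isSome_iff_exists.mp ((wt.supp b a).mp hs)
      exact ⟨hfib, Or.inr (wt.ads wt.aug (fun _ _ _ h => h) b a c hc).1⟩
  · intro h
    have key : ∀ x y : V, φ x = φ y → DStar H G' φ x y → wt.P.r x y := by
      intro x y hf hd
      rcases wt.dstar_inv ff hd with h | ⟨x', y', hxx, hyy, hedge⟩
      · exact h
      · by_cases hxy : wt.P.r x y
        · exact hxy
        · exfalso
          have hnc : ¬ wt.P.r x' y' := fun hc =>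
            hxy (wt.P.iseqv.trans hxx (wt.P.iseqv.trans hc (wt.P.iseqv.symm hyy)))
          have hsome := wt.cross_some hnc hedge
          have e1 : φ x = φ x' := wt.const _ _ hxx
          have e2 : φ y = φ y' := wt.const _ _ hyy
          rw [← e1, ← e2, hf, G'.irrefl] at hsome
          exact absurd hsome (by simp)
    induction h with
    | refl => exact wt.P.iseqv.refl u
    | @tail b c h1 h2 ih =>
      refine wt.P.iseqv.trans ih ?_
      obtain ⟨hfib, hd⟩ := h2
      rcases hd with hd | hd
      · exact key b c hfib hd
      · exact wt.P.iseqv.symm (key c b hfib.symm hd)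

end Wit

open Classical in
noncomputable def canonF (H : EColGraph V k) (G' : CDigraph W k) (φ : V → W) :
    V → V → Option (Fin (k+1)) := fun u v =>
  if (¬ RCrel H G' φ u v ∧ ∃ a b, RCrel H G' φ u a ∧ RCrel H G' φ v b ∧ DStar H G' φ a b)
  then G'.col (φ u) (φ v) else none

namespace Wit

theorem rcol_eq_canonF (wt : Wit H G' φ hn) (ff : ∀ a b, ¬ QFork wt.A.col a b) :
    rcol wt.H0 wt.P = canonF H G' φ := by
  classical
  funext u v
  by_cases hcond : ¬ RCrel H G' φ u v ∧
      ∃ a b, RCrel H G' φ u a ∧ RCrel H G' φ v b ∧ DStar H G' φ a b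
  · obtain ⟨hnrc, a, b, hua, hvb, hd⟩ := hcond
    have hnuv : ¬ wt.P.r u v := fun h => hnrc ((wt.P_eq_RC ff u v).mp h)
    have hua' : wt.P.r u a := (wt.P_eq_RC ff u a).mpr hua
    have hvb' : wt.P.r v b := (wt.P_eq_RC ff v b).mpr hvb
    rcases wt.dstar_inv ff hd with h | ⟨a', b', haa, hbb, hedge⟩
    · exact absurd (wt.P.iseqv.trans hua' (wt.P.iseqv.trans h (wt.P.iseqv.symm hvb'))) hnuv
    · have hcond2 : ¬ wt.P.r u v ∧
          ∃ c x y, wt.P.r u x ∧ wt.P.r v y ∧ wt.H0.col x y = some c := by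
        obtain ⟨c, hc⟩ := Option.isSome_iff_exists.mp hedge
        exact ⟨hnuv, c, a', b', wt.P.iseqv.trans hua' haa, wt.P.iseqv.trans hvb' hbb, hc⟩
      have hr : rcol wt.H0 wt.P u v = some hcond2.2.choose := by
        simp only [rcol]; rw [dif_pos hcond2]
      rw [hr]
      obtain ⟨x, y, hux, hvy, hxy⟩ := hcond2.2.choose_spec
      have hnxy : ¬ wt.P.r x y := fun hc =>
        hnuv (wt.P.iseqv.trans hux (wt.P.iseqv.trans hc (wt.P.iseqv.symm hvy)))
      have hcol := wt.cross_col hnxy hxy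
      rw [canonF, if_pos ⟨hnrc, a, b, hua, hvb, hd⟩]
      have e1 : φ u = φ x := wt.const _ _ hux
      have e2 : φ v = φ y := wt.const _ _ hvy
      rw [e1, e2, hcol]
  · rw [canonF, if_neg hcond]
    simp only [rcol]
    rw [dif_neg]
    intro hc2
    apply hcond
    obtain ⟨hnuv, c, x, y, hux, hvy, hxy⟩ := hc2
    have hnrc : ¬ RCrel H G' φ u v := fun h => hnuv ((wt.P_eq_RC ff u v).mpr h)
    obtain ⟨c', hc'⟩ := Option.isSome_iff_exists.mp ((wt.supp x y).mp (by rw [hxy]; rfl))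
    have hds := (wt.ads wt.aug (fun _ _ _ h => h) x y c' hc').1
    exact ⟨hnrc, x, y, (wt.P_eq_RC ff u x).mp hux, (wt.P_eq_RC ff v y).mp hvy, hds⟩

end Wit

theorem wit_unique [Fintype V]
    (wt1 wt2 : Wit H G' φ (Nat.choose (Fintype.card V) 2 - 2)) :
    wt1.P = wt2.P ∧ rcol wt1.H0 wt1.P = rcol wt2.H0 wt2.P := by
  have ff1 : ∀ a b, ¬ QFork wt1.A.col a b := fun a b => isAug_forkFree wt1.aug a b
  have ff2 : ∀ a b, ¬ QFork wt2.A.col a b := fun a b => isAug_forkFree wt2.aug a b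
  constructor
  · exact Setoid.ext fun a b => (wt1.P_eq_RC ff1 a b).trans (wt2.P_eq_RC ff2 a b).symm
  · rw [wt1.rcol_eq_canonF ff1, wt2.rcol_eq_canonF ff2]

theorem wit_hom {G : EColGraph W k} (wt : Wit H G' φ hn) (hG' : IsAug G hn G') :
    IsHom H G φ := by
  intro u v c hH
  rcases isAug_edge wt.aug u v c hH with he | he
  · have h0 := wt.keep he (Fin.succ_ne_zero c)
    have hnr : ¬ wt.P.r u v := fun hr => Fin.succ_ne_zero c (wt.internal_zero hr h0)
    have hcol := wt.cross_col hnr h0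
    obtain ⟨c', hcc, hGcol⟩ := isAug_nonzero hG' _ _ _ hcol (Fin.succ_ne_zero c)
    rwa [show c' = c from (Fin.succ_injective _ hcc).symm] at hGcol
  · have h0 := wt.keep he (Fin.succ_ne_zero c)
    have hnr : ¬ wt.P.r v u := fun hr => Fin.succ_ne_zero c (wt.internal_zero hr h0)
    have hcol := wt.cross_col hnr h0
    obtain ⟨c', hcc, hGcol⟩ := isAug_nonzero hG' _ _ _ hcol (Fin.succ_ne_zero c)
    rw [show c' = c from (Fin.succ_injective _ hcc).symm] at hGcol
    rw [G.symm]
    exact hGcol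

end ECount
namespace ECount
open Relation

variable {V W : Type} {k : ℕ}

section Exist

variable [Fintype V] {H : EColGraph V k} {G : EColGraph W k} {φ : V → W}

open Classical in
theorem exists_aug_inv (hφ : IsHom H G φ) :
    ∀ {n : ℕ} {G' : CDigraph W k}, IsAug G n G' →
      ∃ A : CDigraph V k, IsAug H n A ∧
        (∀ u v c, A.col u v = some c → (φ u = φ v ∧ c = 0) ∨ (G'.col (φ u) (φ v)).isSome) ∧
        (∀ u v c, A.col u v = some c → c ≠ 0 → G'.col (φ u) (φ v) = some c) := by
  intro n
  induction n with
  | zero =>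
    intro G' hG'
    set ocol : V → V → Option (Fin (k+1)) := fun u v =>
      if h : ∃ c : Fin k, H.col u v = some c ∧ G'.col (φ u) (φ v) = some c.succ
      then some (Fin.succ h.choose) else none with hocol
    have ospec : ∀ u v d, ocol u v = some d →
        ∃ c : Fin k, d = c.succ ∧ H.col u v = some c ∧ G'.col (φ u) (φ v) = some c.succ := by
      intro u v d hd
      rw [hocol] at hd
      simp only [] at hd
      by_cases h : ∃ c : Fin k, H.col u v = some c ∧ G'.col (φ u) (φ v) = some c.succ
      · rw [dif_pos h] at hd
        obtain ⟨hH, hG⟩ := h.choose_spec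
        exact ⟨h.choose, (Option.some_injective _ hd).symm, hH, hG⟩
      · rw [dif_neg h] at hd; exact absurd hd (by simp)
    have oof : ∀ u v (c : Fin k), H.col u v = some c → G'.col (φ u) (φ v) = some c.succ →
        ocol u v = some c.succ := by
      intro u v c hH hG
      have h : ∃ c : Fin k, H.col u v = some c ∧ G'.col (φ u) (φ v) = some c.succ := ⟨c, hH, hG⟩
      rw [hocol]; simp only []
      rw [dif_pos h]
      have := h.choose_spec.1
      exact congrArg (fun x => some (Fin.succ x)) (Option.some_injective _ (this.symm.trans hH))
    have hirr : ∀ v, ocol v v = none := by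
      intro v
      rw [hocol]; simp only []
      rw [dif_neg]
      rintro ⟨c, hc, -⟩
      rw [H.irrefl] at hc; exact absurd hc (by simp)
    have hasym : ∀ u v, (ocol u v).isSome → ocol v u = none := by
      intro u v hs
      obtain ⟨d, hd⟩ := Option.isSome_iff_exists.mp hs
      obtain ⟨c, rfl, hH, hG⟩ := ospec u v d hd
      rw [hocol]; simp only []
      rw [dif_neg]
      rintro ⟨c', hc', hG'c⟩
      have := G'.asym _ _ (by rw [hG]; rfl)
      rw [this] at hG'c; exact absurd hG'c (by simp)
    refine ⟨⟨ocol, hirr, hasym⟩, ⟨?_, ?_⟩, ?_, ?_⟩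
    · intro u v c hc
      obtain ⟨c', rfl, hH, -⟩ := ospec u v c hc
      exact ⟨c', rfl, hH⟩
    · intro u v c hc
      have hGc : G.col (φ u) (φ v) = some c := hφ u v c hc
      rcases hG'.2 _ _ _ hGc with hg | hg
      · exact Or.inl (oof u v c hc hg)
      · have hHvu : H.col v u = some c := by rw [H.symm]; exact hc
        exact Or.inr (oof v u c hHvu hg)
    · intro u v c hc
      obtain ⟨c', rfl, -, hG⟩ := ospec u v c hc
      exact Or.inr (by rw [hG]; rfl)
    · intro u v c hc _
      obtain ⟨c', rfl, -, hG⟩ := ospec u v c hc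
      exact hG
  | succ n ih =>
    rintro G'' ⟨Gp, hGp, hfrat⟩
    obtain ⟨A, hAaug, hinva, hinvb⟩ := ih hGp
    set ord : V → V → Prop := fun u v => (Fintype.equivFin V u : ℕ) < Fintype.equivFin V v
      with hord
    set pick : V → V → Prop :=
      fun u v => if φ u = φ v then ord u v else (G''.col (φ u) (φ v)).isSome with hpick
    have claim_some : ∀ u v, QFork A.col u v → φ u ≠ φ v →
        (G''.col (φ u) (φ v)).isSome ∨ (G''.col (φ v) (φ u)).isSome := by
      rintro u v ⟨hne, h1, h2, w, hw1, hw2⟩ hfib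
      obtain ⟨c1, hc1⟩ := Option.isSome_iff_exists.mp hw1
      obtain ⟨c2, hc2⟩ := Option.isSome_iff_exists.mp hw2
      rcases hinva u w c1 hc1 with ⟨e1, -⟩ | hsu <;> rcases hinva v w c2 hc2 with ⟨e2, -⟩ | hsv
      · exact absurd (e1.trans e2.symm) hfib
      · rw [← e1] at hsv
        obtain ⟨c, hcc⟩ := Option.isSome_iff_exists.mp hsv
        exact Or.inr (by rw [hfrat.1 _ _ _ hcc]; rfl)
      · rw [← e2] at hsu
        obtain ⟨c, hcc⟩ := Option.isSome_iff_exists.mp hsu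
        exact Or.inl (by rw [hfrat.1 _ _ _ hcc]; rfl)
      · by_cases hp1 : (Gp.col (φ u) (φ v)).isSome
        · obtain ⟨c, hcc⟩ := Option.isSome_iff_exists.mp hp1
          exact Or.inl (by rw [hfrat.1 _ _ _ hcc]; rfl)
        · by_cases hp2 : (Gp.col (φ v) (φ u)).isSome
          · obtain ⟨c, hcc⟩ := Option.isSome_iff_exists.mp hp2
            exact Or.inr (by rw [hfrat.1 _ _ _ hcc]; rfl)
          · have hq : QFork Gp.col (φ u) (φ v) :=
              ⟨hfib, Option.not_isSome_iff_eq_none.mp hp1,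
                Option.not_isSome_iff_eq_none.mp hp2, φ w, hsu, hsv⟩
            rcases hfrat.2.1 _ _ hq with hg | hg
            · exact Or.inl (by rw [hg]; rfl)
            · exact Or.inr (by rw [hg]; rfl)
    have pick_total : ∀ u v, QFork A.col u v → pick u v ∨ pick v u := by
      intro u v hq
      rw [hpick]
      by_cases hfib : φ u = φ v
      · simp only [if_pos hfib, if_pos hfib.symm]
        have : Fintype.equivFin V u ≠ Fintype.equivFin V v :=
          fun h => hq.1 ((Fintype.equivFin V).injective h)
        rcases Nat.lt_or_ge (Fintype.equivFin V u : ℕ) (Fintype.equivFin V v : ℕ) with h | h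
        · exact Or.inl h
        · refine Or.inr (lt_of_le_of_ne h ?_)
          intro hh
          exact this (Fin.ext hh.symm)
      · have hfib' : ¬ (φ v = φ u) := fun h => hfib h.symm
        simp only [if_neg hfib, if_neg hfib']
        exact claim_some u v hq hfib
    have pick_excl : ∀ u v, u ≠ v → pick u v → ¬ pick v u := by
      intro u v hne hp hp'
      rw [hpick] at hp hp'
      by_cases hfib : φ u = φ v
      · rw [if_pos hfib] at hp
        rw [if_pos hfib.symm] at hp'
        rw [hord] at hp hp'
        omega
      · rw [if_neg hfib] at hp
        rw [if_neg (fun h => hfib h.symm)] at hp'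
        have := G''.asym _ _ hp
        rw [this] at hp'
        exact absurd hp' (by simp)
    set acol : V → V → Option (Fin (k+1)) := fun u v =>
      if (A.col u v).isSome then A.col u v
      else if QFork A.col u v ∧ pick u v then some 0 else none with hacol
    have hold : ∀ u v c, A.col u v = some c → acol u v = some c := by
      intro u v c hc
      rw [hacol]; simp only []
      rw [if_pos (by rw [hc]; rfl), hc]
    have hcases : ∀ u v c, acol u v = some c →
        A.col u v = some c ∨ (QFork A.col u v ∧ pick u v ∧ c = 0) := by
      intro u v c hc
      rw [hacol] at hc; simp only [] at hc
      by_cases hs : (A.col u v).isSome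
      · rw [if_pos hs] at hc; exact Or.inl hc
      · rw [if_neg hs] at hc
        by_cases hq : QFork A.col u v ∧ pick u v
        · rw [if_pos hq] at hc
          exact Or.inr ⟨hq.1, hq.2, (Option.some_injective _ hc).symm⟩
        · rw [if_neg hq] at hc; exact absurd hc (by simp)
    have hnone : ∀ u v, A.col u v = none → ¬ (QFork A.col u v ∧ pick u v) → acol u v = none := by
      intro u v h1 h2
      rw [hacol]; simp only []
      rw [if_neg (by rw [h1]; simp), if_neg h2]
    have hirr : ∀ v, acol v v = none := by
      intro v
      apply hnone
      · exact A.irrefl v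
      · rintro ⟨hq, -⟩; exact hq.1 rfl
    have hasym : ∀ u v, (acol u v).isSome → acol v u = none := by
      intro u v hs
      obtain ⟨c, hc⟩ := Option.isSome_iff_exists.mp hs
      rcases hcases u v c hc with h | ⟨hq, hp, -⟩
      · apply hnone
        · exact A.asym u v (by rw [h]; rfl)
        · rintro ⟨hq, -⟩
          rw [hq.2.2.1] at h
          exact absurd h (by simp)
      · apply hnone
        · exact hq.2.2.1
        · rintro ⟨hq', hp'⟩
          exact pick_excl u v hq.1 hp hp'
    have hfratA : IsFraternalAug A ⟨acol, hirr, hasym⟩ := by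
      refine ⟨hold, ?_, ?_⟩
      · intro u v hq
        rcases pick_total u v hq with hp | hp
        · left
          show acol u v = some 0
          rw [hacol]; simp only []
          rw [if_neg (by rw [hq.2.1]; simp), if_pos ⟨hq, hp⟩]
        · right
          show acol v u = some 0
          rw [hacol]; simp only []
          rw [if_neg (by rw [hq.2.2.1]; simp), if_pos ⟨qfork_symm hq, hp⟩]
      · intro u v c hc
        rcases hcases u v c hc with h | ⟨hq, -, hc0⟩
        · exact Or.inl h
        · exact Or.inr ⟨Or.inl hq, hc0⟩
    refine ⟨⟨acol, hirr, hasym⟩, ⟨A, hAaug, hfratA⟩, ?_, ?_⟩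
    · intro u v c hc
      rcases hcases u v c hc with h | ⟨hq, hp, rfl⟩
      · rcases hinva u v c h with hint | hsome
        · exact Or.inl hint
        · obtain ⟨c', hcc⟩ := Option.isSome_iff_exists.mp hsome
          exact Or.inr (by rw [hfrat.1 _ _ _ hcc]; rfl)
      · by_cases hfib : φ u = φ v
        · exact Or.inl ⟨hfib, rfl⟩
        · rw [hpick] at hp; rw [if_neg hfib] at hp
          exact Or.inr hp
    · intro u v c hc hc0
      rcases hcases u v c hc with h | ⟨-, -, rfl⟩
      · exact hfrat.1 _ _ _ (hinvb u v c h hc0)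
      · exact absurd rfl hc0

open Classical in
theorem exists_wit (hφ : IsHom H G φ) {n : ℕ} {G' : CDigraph W k} (hG' : IsAug G n G') :
    Nonempty (Wit H G' φ n) := by
  obtain ⟨A, hAaug, hinva, hinvb⟩ := exists_aug_inv hφ hG'
  set h0col : V → V → Option (Fin (k+1)) := fun u v =>
    if A.col u v = some 0 ∧ φ u ≠ φ v then G'.col (φ u) (φ v) else A.col u v with hh0
  have hsupp : ∀ u v, (h0col u v).isSome ↔ (A.col u v).isSome := by
    intro u v
    rw [hh0]; simp only []
    by_cases hc : A.col u v = some 0 ∧ φ u ≠ φ v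
    · rw [if_pos hc]
      constructor
      · intro _; rw [hc.1]; rfl
      · intro _
        rcases hinva u v 0 hc.1 with ⟨hfib, -⟩ | hsome
        · exact absurd hfib hc.2
        · exact hsome
    · rw [if_neg hc]
  have hirr : ∀ v, h0col v v = none := by
    intro v
    rw [hh0]; simp only []
    rw [if_neg (fun h => h.2 rfl)]
    exact A.irrefl v
  have hasym : ∀ u v, (h0col u v).isSome → h0col v u = none := by
    intro u v hs
    rw [hsupp] at hs
    have := A.asym u v hs
    rw [← Option.not_isSome_iff_eq_none, hsupp, this]
    simp
  set H0 : CDigraph V k := ⟨h0col, hirr, hasym⟩ with hH0def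
  have hrz : RecolorZeros A H0 := by
    intro u v
    show h0col u v = A.col u v ∨ _
    by_cases hc : A.col u v = some 0 ∧ φ u ≠ φ v
    · refine Or.inr ⟨hc.1, ?_⟩
      show (h0col u v).isSome
      rw [hsupp, hc.1]; rfl
    · left; rw [hh0]; simp only []; rw [if_neg hc]
  set Pr : V → V → Prop :=
    ReflTransGen (fun a b => φ a = φ b ∧ ((A.col a b).isSome ∨ (A.col b a).isSome)) with hPr
  have hPrsymm : Symmetric Pr := by
    rw [hPr]
    exact fun _ _ h => (@ReflTransGen.stdSymm _ _ ⟨fun a b hab => ⟨hab.1.symm, hab.2.symm⟩⟩).symm _ _ h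
  set P : Setoid V := ⟨Pr, ⟨fun x => ReflTransGen.refl, fun h => hPrsymm h,
    fun h1 h2 => ReflTransGen.trans h1 h2⟩⟩ with hPdef
  have hconst : ∀ u v, Pr u v → φ u = φ v := by
    intro u v h
    rw [hPr] at h
    induction h with
    | refl => rfl
    | tail h1 h2 ih => exact ih.trans h2.1
  have hF1 : ∀ u v c, φ u ≠ φ v → h0col u v = some c → G'.col (φ u) (φ v) = some c := by
    intro u v c hfib hc
    rw [hh0] at hc; simp only [] at hc
    by_cases hcnd : A.col u v = some 0 ∧ φ u ≠ φ v
    · rw [if_pos hcnd] at hc; exact hc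
    · rw [if_neg hcnd] at hc
      have hc0 : c ≠ 0 := by
        rintro rfl
        exact hcnd ⟨hc, hfib⟩
      exact hinvb u v c hc hc0
  have hint0 : ∀ u v c, φ u = φ v → h0col u v = some c → c = 0 := by
    intro u v c hfib hc
    rw [hh0] at hc; simp only [] at hc
    rw [if_neg (fun h => h.2 hfib)] at hc
    rcases hinva u v c hc with ⟨-, h⟩ | hsome
    · exact h
    · exfalso; rw [hfib, G'.irrefl] at hsome; exact absurd hsome (by simp)
  have hedge_rel : ∀ u v, (h0col u v).isSome → φ u = φ v → Pr u v := by
    intro u v hs hfib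
    rw [hsupp] at hs
    exact ReflTransGen.single ⟨hfib, Or.inl hs⟩
  have hadm : ZeroAdmissible H0 P := by
    refine ⟨?_, ?_, ?_, ?_⟩
    · intro u v hr c hc
      exact hint0 u v c (hconst u v hr) hc
    · intro u v h
      show ReflTransGen _ u v
      have h' : Pr u v := h
      rw [hPr] at h'
      induction h' with
      | refl => exact .refl
      | @tail b c h1 h2 ih =>
        refine (ih (h1 : Pr u b)).tail ?_
        have hub : Pr u b := h1
        have huc : Pr u c := ReflTransGen.tail h1 h2
        refine ⟨hPrsymm hub, hPrsymm huc, ?_⟩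
        rcases h2.2 with hs | hs
        · exact Or.inl ((hsupp b c).mpr hs)
        · exact Or.inr ((hsupp c b).mpr hs)
    · intro u u' v v' huu hvv hnuv hsome
      have hfib : φ u ≠ φ v := by
        intro hfib
        exact hnuv (hedge_rel u v hsome hfib)
      obtain ⟨c, hc⟩ := Option.isSome_iff_exists.mp hsome
      have hG1 := hF1 u v c hfib hc
      rw [← Option.not_isSome_iff_eq_none]
      intro hs2
      obtain ⟨c', hc'⟩ := Option.isSome_iff_exists.mp hs2
      have e1 : φ u = φ u' := hconst _ _ huu
      have e2 : φ v = φ v' := hconst _ _ hvv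
      have hfib2 : φ v' ≠ φ u' := by
        rw [← e1, ← e2]; exact fun h => hfib h.symm
      have hG2 := hF1 v' u' c' hfib2 hc'
      rw [← e1, ← e2] at hG2
      have := G'.asym _ _ (by rw [hG2]; rfl)
      rw [this] at hG1
      exact absurd hG1 (by simp)
    · intro u u' v v' c c' huu hvv hnuv hc hc'
      have hfib : φ u ≠ φ v := by
        intro hfib
        have hc2 : h0col u v = some c := hc
        exact hnuv (hedge_rel u v (by rw [hc2]; rfl) hfib)
      have e1 : φ u = φ u' := hconst _ _ huu
      have e2 : φ v = φ v' := hconst _ _ hvv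
      have hfib' : φ u' ≠ φ v' := by rw [← e1, ← e2]; exact hfib
      have hG1 := hF1 u v c hfib hc
      have hG2 := hF1 u' v' c' hfib' hc'
      rw [← e1, ← e2] at hG2
      rw [hG1] at hG2
      exact (Option.some_injective _ hG2.symm)
  have hcompat : ∀ u v c, rcol H0 P u v = some c → G'.col (φ u) (φ v) = some c := by
    intro u v c hr
    simp only [rcol] at hr
    by_cases hcnd : ¬ P.r u v ∧ ∃ c' u' v', P.r u u' ∧ P.r v v' ∧ H0.col u' v' = some c'
    · rw [dif_pos hcnd] at hr
      have hchoose : hcnd.2.choose = c := Option.some_injective _ hr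
      obtain ⟨x, y, hux, hvy, hxy⟩ := hcnd.2.choose_spec
      rw [hchoose] at hxy
      have hfib : φ x ≠ φ y := by
        intro hfib
        have hxy2 : h0col x y = some c := hxy
        have : Pr x y := hedge_rel x y (by rw [hxy2]; rfl) hfib
        exact hcnd.1 (ReflTransGen.trans (hux : Pr u x)
          (ReflTransGen.trans this (hPrsymm (hvy : Pr v y))))
      have := hF1 x y c hfib hxy
      rw [← hconst _ _ hux, ← hconst _ _ hvy] at this
      exact this
    · rw [dif_neg hcnd] at hr
      exact absurd hr (by simp)
  exact ⟨⟨A, H0, P, hAaug, hrz, hadm, hconst, hcompat⟩⟩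

end Exist

end ECount
set_option linter.unusedSectionVars false
namespace ECount
open Relation

variable {V W : Type} {k : ℕ}

section Final

variable [Fintype V] [Fintype W] {H : EColGraph V k} {G : EColGraph W k}

noncomputable def theWit {nn : ℕ} (H : EColGraph V k) (G : EColGraph W k) (G' : CDigraph W k)
    (hG' : IsAug G nn G') (ψ : V → W) (hψ : IsHom H G ψ) : Wit H G' ψ nn :=
  (exists_wit hψ hG').some

noncomputable def mkWit {nn : ℕ} (H : EColGraph V k) (G' : CDigraph W k)
    (x : Setoid V × (V → V → Option (Fin (k + 1))))
    (hx : ∃ A H0 : CDigraph V k, IsAug H nn A ∧ RecolorZeros A H0 ∧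
      ZeroAdmissible H0 x.1 ∧ x.2 = rcol H0 x.1)
    (ψ : V → W) (h1 : ∀ u v, x.1.r u v → ψ u = ψ v)
    (h2 : ∀ u v c, x.2 u v = some c → G'.col (ψ u) (ψ v) = some c) : Wit H G' ψ nn where
  A := hx.choose
  H0 := hx.choose_spec.choose
  P := x.1
  aug := hx.choose_spec.choose_spec.1
  rz := hx.choose_spec.choose_spec.2.1
  adm := hx.choose_spec.choose_spec.2.2.1
  const := h1
  compat := fun u v c hc => h2 u v c (by rw [hx.choose_spec.choose_spec.2.2.2]; exact hc)

theorem mkWit_P {nn : ℕ} (H : EColGraph V k) (G' : CDigraph W k) (x hx ψ h1 h2) :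
    (mkWit (nn := nn) H G' x hx ψ h1 h2).P = x.1 := rfl

theorem mkWit_rcol {nn : ℕ} (H : EColGraph V k) (G' : CDigraph W k) (x hx ψ h1 h2) :
    rcol (mkWit (nn := nn) H G' x hx ψ h1 h2).H0 (mkWit (nn := nn) H G' x hx ψ h1 h2).P
      = x.2 :=
  (hx.choose_spec.choose_spec.2.2.2).symm

noncomputable def mainEquiv (H : EColGraph V k) (G : EColGraph W k) (G' : CDigraph W k)
    (hG' : IsAug G (Nat.choose (Fintype.card V) 2 - 2) G') :
    {ψ : V → W // IsHom H G ψ} ≃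
      Σ x : {x : Setoid V × (V → V → Option (Fin (k + 1))) //
          ∃ A H0 : CDigraph V k,
            IsAug H (Nat.choose (Fintype.card V) 2 - 2) A ∧ RecolorZeros A H0 ∧
            ZeroAdmissible H0 x.1 ∧ x.2 = rcol H0 x.1},
        {ψ : V → W // (∀ u v, x.val.1.r u v → ψ u = ψ v) ∧
          ∀ u v c, x.val.2 u v = some c → G'.col (ψ u) (ψ v) = some c} where
  toFun p :=
    ⟨⟨((theWit H G G' hG' p.1 p.2).P, rcol (theWit H G G' hG' p.1 p.2).H0
        (theWit H G G' hG' p.1 p.2).P),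
      ⟨(theWit H G G' hG' p.1 p.2).A, (theWit H G G' hG' p.1 p.2).H0,
        (theWit H G G' hG' p.1 p.2).aug, (theWit H G G' hG' p.1 p.2).rz,
        (theWit H G G' hG' p.1 p.2).adm, rfl⟩⟩,
      ⟨p.1, (theWit H G G' hG' p.1 p.2).const, (theWit H G G' hG' p.1 p.2).compat⟩⟩
  invFun s :=
    ⟨s.2.val, wit_hom (mkWit H G' s.1.val s.1.property s.2.val s.2.property.1
      s.2.property.2) hG'⟩
  left_inv p := Subtype.ext rfl
  right_inv s := by
    obtain ⟨x, ψq⟩ := s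
    obtain ⟨ψ, hc⟩ := ψq
    set wt2 := mkWit H G' x.val x.property ψ hc.1 hc.2 with hwt2
    set wt1 := theWit H G G' hG' ψ (wit_hom wt2 hG') with hwt1
    have hu := wit_unique wt1 wt2
    have h1 : wt1.P = x.val.1 := hu.1
    have h2 : rcol wt1.H0 wt1.P = x.val.2 :=
      hu.2.trans (mkWit_rcol H G' x.val x.property ψ hc.1 hc.2)
    exact Sigma.subtype_ext (Subtype.ext (Prod.ext h1 h2)) rfl
end Final

end ECount

theorem hom_eq_sum_contractions {V W : Type} [Fintype V] [Fintype W] {k : ℕ}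
    (H : EColGraph V k) (G : EColGraph W k) (G' : CDigraph W k)
    (hG' : IsAug G (Nat.choose (Fintype.card V) 2 - 2) G') :
    homCount H G =
      ∑ᶠ x : {x : Setoid V × (V → V → Option (Fin (k + 1))) //
          ∃ A H0 : CDigraph V k,
            IsAug H (Nat.choose (Fintype.card V) 2 - 2) A ∧ RecolorZeros A H0 ∧
            ZeroAdmissible H0 x.1 ∧ x.2 = rcol H0 x.1},
        contractionHomCount x.1.1 x.1.2 G'.col := by
  classical
  haveI : Finite (Setoid V) :=
    Finite.of_injective (fun s : Setoid V => s.r)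
      (fun s t h => Setoid.ext fun a b => iff_of_eq (congrFun (congrFun h a) b))
  haveI instX : Fintype {x : Setoid V × (V → V → Option (Fin (k + 1))) //
      ∃ A H0 : CDigraph V k,
        IsAug H (Nat.choose (Fintype.card V) 2 - 2) A ∧ RecolorZeros A H0 ∧
        ZeroAdmissible H0 x.1 ∧ x.2 = rcol H0 x.1} := Fintype.ofFinite _
  haveI instB : ∀ x : {x : Setoid V × (V → V → Option (Fin (k + 1))) //
      ∃ A H0 : CDigraph V k,
        IsAug H (Nat.choose (Fintype.card V) 2 - 2) A ∧ RecolorZeros A H0 ∧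
        ZeroAdmissible H0 x.1 ∧ x.2 = rcol H0 x.1},
      Fintype {ψ : V → W // (∀ u v, x.val.1.r u v → ψ u = ψ v) ∧
        ∀ u v c, x.val.2 u v = some c → G'.col (ψ u) (ψ v) = some c} :=
    fun x => Fintype.ofFinite _
  rw [homCount, Nat.card_congr (ECount.mainEquiv H G G' hG'), Nat.card_eq_fintype_card,
    Fintype.card_sigma, finsum_eq_sum_of_fintype]
  refine Finset.sum_congr rfl fun x _ => ?_
  rw [contractionHomCount, Nat.card_eq_fintype_card]
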